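/- Let $P = (\theta^*_{z^*_1},\dots,\theta^*_{z^*_n}) \in \mathbb{R}^{p\times n}$ with each cluster nonempty, and let $P = U\Sigma V^T$ be an SVD of $P$ with $V \in \mathbb{R}^{n\times k}$ having orthonormal columns spanning the row space of $P$. Then there exists an orthogonal matrix $W \in \mathbb{R}^{k\times k}$ such that $V = Z^* D^{-1/2} W$; in particular, the $i$-th and $j$-th rows of $V$ coincide whenever $z^*_i = z^*_j$. -/

import Mathlib

open Matrix Finset

theorem right_singular_vectors_structure (p n k : ℕ)
    (z : Fin n → Fin k) (hne : ∀ j : Fin k, ∃ i, z i = j)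
    (θ : Fin k → Fin p → ℝ)
    (P : Matrix (Fin p) (Fin n) ℝ) (hP : ∀ x i, P x i = θ (z i) x)
    (U : Matrix (Fin p) (Fin k) ℝ) (σ : Fin k → ℝ) (hσnn : ∀ l, 0 ≤ σ l)
    (V : Matrix (Fin n) (Fin k) ℝ)
    (hUorth : Uᵀ * U = 1) (hVorth : Vᵀ * V = 1)
    (hSVD : P = U * Matrix.diagonal σ * Vᵀ)
    -- the columns of V span (hence lie in) the row space of P
    (hspan : ∀ j : Fin k, (fun i => V i j) ∈
      Submodule.span ℝ (Set.range fun x : Fin p => fun i => P x i))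
    (Z : Matrix (Fin n) (Fin k) ℝ)
    (hZ : ∀ i j, Z i j = if z i = j then 1 else 0) :
    ∃ W : Matrix (Fin k) (Fin k) ℝ, Wᵀ * W = 1 ∧
      V = Z * (Matrix.diagonal fun j =>
        (Real.sqrt ((Finset.univ.filter fun i => z i = j).card : ℝ))⁻¹) * W ∧
      ∀ i i' : Fin n, z i = z i' → (fun j => V i j) = (fun j => V i' j) := by
  -- V is constant on clusters
  have hconst : ∀ (i i' : Fin n), z i = z i' → ∀ j, V i j = V i' j := by
    intro i i' hz j
    have key : ∀ v ∈ Submodule.span ℝ (Set.range fun x : Fin p => fun i => P x i),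
        v i = v i' := by
      intro v hv
      induction hv using Submodule.span_induction with
      | mem v hv => obtain ⟨x, rfl⟩ := hv; simp [hP, hz]
      | zero => simp
      | add _ _ _ _ h1 h2 => simp [h1, h2]
      | smul a _ _ h1 => simp [h1]
    exact key _ (hspan j)
  -- representatives
  choose rep hrep using hne
  have hVrep : ∀ i j, V i j = V (rep (z i)) j := fun i j =>
    hconst i (rep (z i)) (hrep (z i)).symm j
  set c : Fin k → ℝ := fun l => ((Finset.univ.filter fun i => z i = l).card : ℝ) with hc
  have hcpos : ∀ l, 0 < c l := by
    intro l
    have : rep l ∈ Finset.univ.filter fun i => z i = l := by simp [hrep l]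
    have h2 := Finset.card_pos.mpr ⟨rep l, this⟩
    simp only [hc]
    exact_mod_cast h2
  have hsqrtpos : ∀ l, 0 < Real.sqrt (c l) := fun l => Real.sqrt_pos.mpr (hcpos l)
  refine ⟨Matrix.of fun l j => Real.sqrt (c l) * V (rep l) j, ?_, ?_, ?_⟩
  · -- orthogonality of W
    ext a b
    have hV := congrFun (congrFun hVorth a) b
    simp only [Matrix.mul_apply, Matrix.transpose_apply, Matrix.of_apply] at hV ⊢
    rw [← hV]
    rw [← Finset.sum_fiberwise_of_maps_to (g := z) (fun i _ => Finset.mem_univ (z i))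
      (fun i => V i a * V i b)]
    refine Finset.sum_congr rfl fun l _ => ?_
    have : ∀ i ∈ Finset.univ.filter fun i => z i = l,
        V i a * V i b = V (rep l) a * V (rep l) b := by
      intro i hi
      simp only [Finset.mem_filter] at hi
      rw [hconst i (rep l) (by rw [hi.2, hrep l]) a, hconst i (rep l) (by rw [hi.2, hrep l]) b]
    rw [Finset.sum_congr rfl this, Finset.sum_const, nsmul_eq_mul]
    have hs : Real.sqrt (c l) * Real.sqrt (c l) = c l :=
      Real.mul_self_sqrt (le_of_lt (hcpos l))
    ring_nf
    rw [sq, hs, hc]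
    ring
  · -- V = Z D^{-1/2} W
    ext i j
    rw [Matrix.mul_assoc, Matrix.mul_apply]
    simp only [hZ, ite_mul, one_mul, zero_mul]
    rw [Finset.sum_eq_single (z i)]
    · rw [Matrix.diagonal_mul, Matrix.of_apply, ← mul_assoc,
        inv_mul_cancel₀ (by rw [hc] at hsqrtpos; exact (hsqrtpos (z i)).ne'), one_mul, ← hVrep]
      simp
    · intro l _ hl; simp [Ne.symm hl]
    · simp
  · intro i i' hz
    funext j
    exact hconst i i' hz j
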